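/- (Minimization of the Frobenius norm under a spectral norm constraint.) Let M be an n×n complex matrix with singular value decomposition M = U * Matrix.diagonal (fun i => (σ i : ℂ)) * Vᴴ, where U and V are unitary and σ i ≥ 0 for all i, and let λ ≥ 0. Define X := U * Matrix.diagonal (fun i => (min (σ i) λ : ℂ)) * Vᴴ. Then ‖X‖₂ ≤ λ, and for every n×n complex matrix Z with ‖Z‖₂ ≤ λ one has ‖X − M‖_F ≤ ‖Z − M‖_F. -/

import Mathlib

open Matrix

/-- Frobenius norm of a complex matrix. -/
noncomputable def frobNorm {n : ℕ} (A : Matrix (Fin n) (Fin n) ℂ) : ℝ :=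
  Real.sqrt (∑ i, ∑ j, ‖A i j‖ ^ 2)

/-- The spectral norm (ℓ²→ℓ² operator norm, i.e. largest singular value) of a
square complex matrix. -/
noncomputable def spectralNorm' {n : ℕ} (A : Matrix (Fin n) (Fin n) ℂ) : ℝ :=
  ‖Matrix.toEuclideanCLM (𝕜 := ℂ) A‖

lemma re_star_mul (z : ℂ) : (star z * z).re = ‖z‖ ^ 2 := by
  rw [Complex.star_def, mul_comm, Complex.mul_conj]
  simp [Complex.normSq_eq_norm_sq]
  norm_cast

lemma frob_sq_eq {n : ℕ} (A : Matrix (Fin n) (Fin n) ℂ) :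
    ∑ i, ∑ j, ‖A i j‖ ^ 2 = (Matrix.trace (Aᴴ * A)).re := by
  rw [Matrix.trace]
  simp only [Matrix.diag, Matrix.mul_apply, Matrix.conjTranspose_apply]
  rw [Complex.re_sum, Finset.sum_comm]
  refine Finset.sum_congr rfl fun i _ => ?_
  rw [Complex.re_sum]
  exact Finset.sum_congr rfl fun j _ => (re_star_mul _).symm

lemma col_sq_sum {n : ℕ} (U : Matrix (Fin n) (Fin n) ℂ) (hU : Uᴴ * U = 1) (i : Fin n) :
    ∑ k, ‖U k i‖ ^ 2 = 1 := by
  have h := congrFun (congrFun hU i) i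
  rw [Matrix.mul_apply, Matrix.one_apply_eq] at h
  have h2 := congrArg Complex.re h
  rw [Complex.re_sum] at h2
  simp only [Matrix.conjTranspose_apply, re_star_mul, Complex.one_re] at h2
  exact h2

lemma unitary_specNorm_le {n : ℕ} (U : Matrix (Fin n) (Fin n) ℂ) (hU : Uᴴ * U = 1) :
    ‖Matrix.toEuclideanCLM (𝕜 := ℂ) U‖ ≤ 1 := by
  have h1 : star (Matrix.toEuclideanCLM (𝕜 := ℂ) U) * Matrix.toEuclideanCLM (𝕜 := ℂ) U = 1 := by
    rw [← map_star, ← _root_.map_mul, Matrix.star_eq_conjTranspose, hU, _root_.map_one]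
  have h2 : ‖Matrix.toEuclideanCLM (𝕜 := ℂ) U‖ * ‖Matrix.toEuclideanCLM (𝕜 := ℂ) U‖ ≤ 1 := by
    rw [← CStarRing.norm_star_mul_self, h1, ContinuousLinearMap.one_def]
    exact ContinuousLinearMap.norm_id_le
  nlinarith [norm_nonneg (Matrix.toEuclideanCLM (𝕜 := ℂ) U)]

lemma diag_specNorm_le {n : ℕ} (d : Fin n → ℂ) (c : ℝ) (hc : 0 ≤ c) (h : ∀ i, ‖d i‖ ≤ c) :
    ‖Matrix.toEuclideanCLM (𝕜 := ℂ) (Matrix.diagonal d)‖ ≤ c := by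
  apply ContinuousLinearMap.opNorm_le_bound _ hc
  intro x
  have hx : ∀ i, (Matrix.toEuclideanCLM (𝕜 := ℂ) (Matrix.diagonal d) x) i = d i * x i := by
    intro i
    have := congrFun (Matrix.ofLp_toEuclideanCLM (Matrix.diagonal d) x) i
    simpa [Matrix.toLin'_apply, Matrix.mulVec_diagonal] using this
  rw [EuclideanSpace.norm_eq, EuclideanSpace.norm_eq]
  rw [show c * Real.sqrt (∑ i, ‖x i‖ ^ 2) = Real.sqrt (c ^ 2 * ∑ i, ‖x i‖ ^ 2) by
    rw [Real.sqrt_mul (sq_nonneg c), Real.sqrt_sq hc]]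
  apply Real.sqrt_le_sqrt
  rw [Finset.mul_sum]
  apply Finset.sum_le_sum
  intro i _
  rw [hx i, norm_mul, mul_pow]
  exact mul_le_mul_of_nonneg_right (pow_le_pow_left₀ (norm_nonneg _) (h i) 2) (sq_nonneg _)

lemma entry_bound {n : ℕ} (U V Z : Matrix (Fin n) (Fin n) ℂ)
    (hU : Uᴴ * U = 1) (hV : Vᴴ * V = 1) (i : Fin n) :
    ‖(Uᴴ * Z * V) i i‖ ≤ ‖Matrix.toEuclideanCLM (𝕜 := ℂ) Z‖ := by
  set u : EuclideanSpace ℂ (Fin n) := (WithLp.equiv 2 _).symm (fun k => U k i) with hu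
  set v : EuclideanSpace ℂ (Fin n) := (WithLp.equiv 2 _).symm (fun k => V k i) with hv
  have hnu : ‖u‖ = 1 := by
    rw [EuclideanSpace.norm_eq]
    simp only [hu, WithLp.equiv_symm_apply, PiLp.toLp_apply]
    rw [col_sq_sum U hU i, Real.sqrt_one]
  have hnv : ‖v‖ = 1 := by
    rw [EuclideanSpace.norm_eq]
    simp only [hv, WithLp.equiv_symm_apply, PiLp.toLp_apply]
    rw [col_sq_sum V hV i, Real.sqrt_one]
  have key : (Uᴴ * Z * V) i i = inner ℂ u (Matrix.toEuclideanCLM (𝕜 := ℂ) Z v) := by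
    rw [PiLp.inner_apply]
    simp only [RCLike.inner_apply]
    have hZv : ∀ k, (Matrix.toEuclideanCLM (𝕜 := ℂ) Z v) k = ∑ l, Z k l * V l i := by
      intro k
      have := congrFun (Matrix.ofLp_toEuclideanCLM Z v) k
      simpa [Matrix.toLin'_apply, Matrix.mulVec, dotProduct, hv] using this
    simp only [hZv, hu, WithLp.equiv_symm_apply, PiLp.toLp_apply]
    rw [Matrix.mul_apply]
    simp only [Matrix.mul_apply, Matrix.conjTranspose_apply]
    simp only [Finset.sum_mul, Finset.mul_sum]
    rw [Finset.sum_comm]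
    refine Finset.sum_congr rfl fun k _ => Finset.sum_congr rfl fun l _ => ?_
    simp only [Complex.star_def]
    ring
  rw [key]
  calc ‖(inner ℂ u (Matrix.toEuclideanCLM (𝕜 := ℂ) Z v) : ℂ)‖
      ≤ ‖u‖ * ‖Matrix.toEuclideanCLM (𝕜 := ℂ) Z v‖ := norm_inner_le_norm _ _
    _ ≤ ‖u‖ * (‖Matrix.toEuclideanCLM (𝕜 := ℂ) Z‖ * ‖v‖) :=
        mul_le_mul_of_nonneg_left (ContinuousLinearMap.le_opNorm _ _) (norm_nonneg _)
    _ = ‖Matrix.toEuclideanCLM (𝕜 := ℂ) Z‖ := by rw [hnu, hnv]; ring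

lemma frob_sq_invariant {n : ℕ} (U V A : Matrix (Fin n) (Fin n) ℂ)
    (hU : Uᴴ * U = 1) (hV : Vᴴ * V = 1) :
    ∑ i, ∑ j, ‖(U * A * Vᴴ) i j‖ ^ 2 = ∑ i, ∑ j, ‖A i j‖ ^ 2 := by
  rw [frob_sq_eq, frob_sq_eq]
  congr 1
  have : (U * A * Vᴴ)ᴴ * (U * A * Vᴴ) = V * (Aᴴ * A) * Vᴴ := by
    simp only [Matrix.conjTranspose_mul, Matrix.conjTranspose_conjTranspose, Matrix.mul_assoc]
    rw [← Matrix.mul_assoc Uᴴ U, hU, Matrix.one_mul]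
  rw [this, Matrix.mul_assoc, Matrix.trace_mul_comm, Matrix.mul_assoc, hV, Matrix.mul_one]

/-- **Minimization of the Frobenius norm under a spectral norm constraint.**
If `M = U * diagonal σ * Vᴴ` is an SVD of `M` and `λ ≥ 0`, then
`X := U * diagonal (min (σ i) λ) * Vᴴ` satisfies `‖X‖₂ ≤ λ` and minimizes the
Frobenius distance to `M` over the spectral-norm ball of radius `λ`. -/
theorem stmt_6 {n : ℕ} (M U V : Matrix (Fin n) (Fin n) ℂ) (σ : Fin n → ℝ)
    (hU : Uᴴ * U = 1) (hV : Vᴴ * V = 1) (hσ : ∀ i, 0 ≤ σ i)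
    (hM : M = U * Matrix.diagonal (fun i => (σ i : ℂ)) * Vᴴ)
    (lam : ℝ) (hlam : 0 ≤ lam) :
    spectralNorm' (U * Matrix.diagonal (fun i => ((min (σ i) lam : ℝ) : ℂ)) * Vᴴ) ≤ lam ∧
      ∀ Z : Matrix (Fin n) (Fin n) ℂ, spectralNorm' Z ≤ lam →
        frobNorm (U * Matrix.diagonal (fun i => ((min (σ i) lam : ℝ) : ℂ)) * Vᴴ - M) ≤
          frobNorm (Z - M) := by
  have hU' : U * Uᴴ = 1 := mul_eq_one_comm.mp hU
  have hV' : V * Vᴴ = 1 := mul_eq_one_comm.mp hV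
  have hVH : (Vᴴ)ᴴ * Vᴴ = 1 := by rw [Matrix.conjTranspose_conjTranspose]; exact hV'
  set dm : Fin n → ℂ := fun i => ((min (σ i) lam : ℝ) : ℂ) with hdm
  constructor
  · -- spectral norm bound
    unfold spectralNorm'
    rw [_root_.map_mul, _root_.map_mul]
    calc ‖Matrix.toEuclideanCLM (𝕜 := ℂ) U * Matrix.toEuclideanCLM (𝕜 := ℂ) (Matrix.diagonal dm) *
            Matrix.toEuclideanCLM (𝕜 := ℂ) Vᴴ‖
        ≤ ‖Matrix.toEuclideanCLM (𝕜 := ℂ) U * Matrix.toEuclideanCLM (𝕜 := ℂ) (Matrix.diagonal dm)‖ *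
            ‖Matrix.toEuclideanCLM (𝕜 := ℂ) Vᴴ‖ := norm_mul_le _ _
      _ ≤ ‖Matrix.toEuclideanCLM (𝕜 := ℂ) U‖ * ‖Matrix.toEuclideanCLM (𝕜 := ℂ) (Matrix.diagonal dm)‖ *
            ‖Matrix.toEuclideanCLM (𝕜 := ℂ) Vᴴ‖ :=
          mul_le_mul_of_nonneg_right (norm_mul_le _ _) (norm_nonneg _)
      _ ≤ 1 * lam * 1 := by
          refine mul_le_mul (mul_le_mul (unitary_specNorm_le U hU) ?_ (norm_nonneg _)
            zero_le_one) (unitary_specNorm_le Vᴴ hVH) (norm_nonneg _) (by linarith)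
          apply diag_specNorm_le _ _ hlam
          intro i
          simp only [hdm, Complex.norm_real, Real.norm_eq_abs]
          rw [abs_of_nonneg (le_min (hσ i) hlam)]
          exact min_le_right _ _
      _ = lam := by ring
  · -- Frobenius minimality
    intro Z hZ
    set W : Matrix (Fin n) (Fin n) ℂ := Uᴴ * Z * V with hW
    set D : Matrix (Fin n) (Fin n) ℂ := Matrix.diagonal (fun i => (σ i : ℂ)) with hD
    have hX : U * Matrix.diagonal dm * Vᴴ - M = U * (Matrix.diagonal dm - D) * Vᴴ := by
      rw [hM, Matrix.mul_sub, Matrix.sub_mul]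
    have hZM : Z - M = U * (W - D) * Vᴴ := by
      have hUWV : U * W * Vᴴ = Z := by
        rw [hW]
        simp only [Matrix.mul_assoc]
        rw [hV', Matrix.mul_one, ← Matrix.mul_assoc, hU', Matrix.one_mul]
      rw [Matrix.mul_sub, Matrix.sub_mul, hUWV, hM]
    unfold frobNorm
    rw [hX, hZM, frob_sq_invariant _ _ _ hU hV, frob_sq_invariant _ _ _ hU hV]
    apply Real.sqrt_le_sqrt
    have hdiag : ∀ i : Fin n,
        ∑ j, ‖(Matrix.diagonal dm - D) i j‖ ^ 2 = ‖dm i - (σ i : ℂ)‖ ^ 2 := by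
      intro i
      rw [Finset.sum_eq_single i]
      · simp [hD, Matrix.sub_apply]
      · intro j _ hj
        simp [hD, Matrix.sub_apply, Matrix.diagonal_apply_ne _ (Ne.symm hj)]
      · simp
    calc ∑ i, ∑ j, ‖(Matrix.diagonal dm - D) i j‖ ^ 2
        = ∑ i, ‖dm i - (σ i : ℂ)‖ ^ 2 := Finset.sum_congr rfl fun i _ => hdiag i
      _ ≤ ∑ i, ‖(W - D) i i‖ ^ 2 := by
          apply Finset.sum_le_sum
          intro i _
          have hWii : ‖W i i‖ ≤ lam := le_trans (entry_bound U V Z hU hV i) hZ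
          have h1 : ‖dm i - (σ i : ℂ)‖ = σ i - min (σ i) lam := by
            rw [hdm]
            rw [show ((min (σ i) lam : ℝ) : ℂ) - ((σ i : ℝ) : ℂ)
                = ((min (σ i) lam - σ i : ℝ) : ℂ) by push_cast; ring]
            rw [Complex.norm_real, Real.norm_eq_abs,
              abs_of_nonpos (sub_nonpos.mpr (min_le_left _ _))]
            ring
          have h2 : σ i - min (σ i) lam ≤ ‖(W - D) i i‖ := by
            have hDii : (W - D) i i = W i i - (σ i : ℂ) := by simp [hD]
            rw [hDii]
            rcases le_or_gt (σ i) lam with h | h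
            · rw [min_eq_left h]
              simpa using norm_nonneg (W i i - (σ i : ℂ))
            · rw [min_eq_right h.le]
              calc σ i - lam ≤ σ i - ‖W i i‖ := by linarith
                _ ≤ ‖(σ i : ℂ)‖ - ‖W i i‖ := by
                    rw [Complex.norm_real, Real.norm_eq_abs, abs_of_nonneg (hσ i)]
                _ ≤ ‖(σ i : ℂ) - W i i‖ := norm_sub_norm_le _ _
                _ = ‖W i i - (σ i : ℂ)‖ := norm_sub_rev _ _
          rw [h1]
          exact pow_le_pow_left₀ (by simp [min_le_left]) h2 2
      _ ≤ ∑ i, ∑ j, ‖(W - D) i j‖ ^ 2 := by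
          apply Finset.sum_le_sum
          intro i _
          exact Finset.single_le_sum (f := fun j => ‖(W - D) i j‖ ^ 2)
            (fun j _ => sq_nonneg _) (Finset.mem_univ i)
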